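/- arXiv:2206.06473 — 3 statements merged into one kernel-verified Lean document; each statement's English description precedes it below -/
import Mathlib

section
/- Let p and p' be open-minded Borel probability measures on the Cantor space ℕ → Bool such that p is absolutely continuous with respect to p'. Then for p-almost every sequence ω, the total variational distance between the conditional measures converges to zero: sup over all Borel sets A of |p(A | Γ_{ω|n}) − p'(A | Γ_{ω|n})| tends to 0 as n → ∞. -/
open MeasureTheory ProbabilityTheory Filter

/-- The cylinder set of infinite binary sequences whose initial segment is `x`. -/
def cylinder (x : List Bool) : Set (ℕ → Bool) :=
  {ω | ∀ i : Fin x.length, ω i = x.get i}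

/-- The initial segment of length `n` of an infinite binary sequence `ω`. -/
def seg (ω : ℕ → Bool) (n : ℕ) : List Bool :=
  List.ofFn (fun i : Fin n => ω i)

namespace BD

noncomputable section

abbrev Ω := ℕ → Bool

def res (n : ℕ) (ω : Ω) : Fin n → Bool := fun i => ω i

lemma measurable_res (n : ℕ) : Measurable (res n) :=
  measurable_pi_lambda _ fun i => measurable_pi_apply _

lemma cylinder_ofFn {n : ℕ} (v : Fin n → Bool) :
    _root_.cylinder (List.ofFn v) = res n ⁻¹' {v} := by
  ext ω
  simp only [_root_.cylinder, Set.mem_setOf_eq, Set.mem_preimage, Set.mem_singleton_iff, List.get_ofFn]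
  constructor
  · intro h
    funext j
    have := h (Fin.cast (List.length_ofFn (f := v)).symm j)
    simpa [res] using this
  · intro h i
    subst h
    simp [res]

lemma seg_def (ω : Ω) (n : ℕ) : seg ω n = List.ofFn (res n ω) := rfl

lemma cylinder_seg (ω : Ω) (n : ℕ) :
    _root_.cylinder (seg ω n) = res n ⁻¹' {res n ω} := cylinder_ofFn (res n ω)

lemma measurableSet_cylinder (x : List Bool) : MeasurableSet (_root_.cylinder x) := by
  have : _root_.cylinder x = ⋂ i : Fin x.length, (fun ω : Ω => ω i) ⁻¹' {x.get i} := by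
    ext ω; simp [_root_.cylinder, Set.mem_iInter]
  rw [this]
  exact MeasurableSet.iInter fun i => (measurable_pi_apply _) (measurableSet_singleton _)

def 𝒢 (n : ℕ) : MeasurableSpace Ω := MeasurableSpace.comap (res n) ⊤

lemma 𝒢_le (n : ℕ) : 𝒢 n ≤ (inferInstance : MeasurableSpace Ω) := by
  rintro s ⟨S, -, rfl⟩
  exact measurable_res n ((Set.to_countable S).measurableSet)

lemma 𝒢_mono : Monotone 𝒢 := by
  intro n m h s hs
  obtain ⟨S, -, rfl⟩ := hs
  refine ⟨(fun v (i : Fin n) => v (Fin.castLE h i)) ⁻¹' S, trivial, ?_⟩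
  rw [← Set.preimage_comp]
  rfl

def ℱ : Filtration ℕ (inferInstance : MeasurableSpace Ω) :=
  { seq := 𝒢, mono' := 𝒢_mono, le' := 𝒢_le }

lemma iSup_𝒢 : (⨆ n, 𝒢 n) = (inferInstance : MeasurableSpace Ω) := by
  refine le_antisymm (iSup_le 𝒢_le) ?_
  have : (inferInstance : MeasurableSpace Ω) = MeasurableSpace.pi := rfl
  rw [this, MeasurableSpace.pi]
  refine iSup_le fun i => ?_
  refine le_trans ?_ (le_iSup 𝒢 (i + 1))
  rintro s ⟨S, -, rfl⟩
  refine ⟨(fun v : Fin (i + 1) → Bool => v ⟨i, Nat.lt_succ_self i⟩) ⁻¹' S, trivial, ?_⟩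
  rw [← Set.preimage_comp]
  rfl

lemma measurable_comp_res {n : ℕ} (ψ : (Fin n → Bool) → ℝ) :
    Measurable[𝒢 n] (fun ω => ψ (res n ω)) := by
  intro s hs
  exact ⟨ψ ⁻¹' s, trivial, rfl⟩

lemma integrable_comp_res {p' : Measure Ω} [IsFiniteMeasure p'] {n : ℕ}
    (ψ : (Fin n → Bool) → ℝ) : Integrable (fun ω => ψ (res n ω)) p' := by
  refine Integrable.mono' (integrable_const (∑ v : Fin n → Bool, |ψ v|))
    (((measurable_comp_res ψ).mono (𝒢_le n) le_rfl).aestronglyMeasurable)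
    (Filter.Eventually.of_forall fun ω => ?_)
  calc ‖ψ (res n ω)‖ = |ψ (res n ω)| := rfl
    _ ≤ ∑ v : Fin n → Bool, |ψ v| :=
      Finset.single_le_sum (fun v _ => abs_nonneg (ψ v)) (Finset.mem_univ _)

lemma setIntegral_preimage {p' : Measure Ω} {n : ℕ} {g : Ω → ℝ} (hg : Integrable g p')
    (S : Set (Fin n → Bool)) [DecidablePred (· ∈ S)] :
    ∫ x in res n ⁻¹' S, g x ∂p' =
      ∑ v ∈ Finset.univ.filter (· ∈ S), ∫ x in res n ⁻¹' {v}, g x ∂p' := by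
  have hU : res n ⁻¹' S = ⋃ v ∈ Finset.univ.filter (· ∈ S), res n ⁻¹' {v} := by
    ext x
    simp only [Set.mem_preimage, Set.mem_iUnion, Finset.mem_filter, Finset.mem_univ, true_and,
      Set.mem_singleton_iff]
    exact ⟨fun h => ⟨res n x, h, rfl⟩, fun ⟨v, hv, he⟩ => he ▸ hv⟩
  have hmeas : ∀ v ∈ Finset.univ.filter (· ∈ S), MeasurableSet (res n ⁻¹' {v} : Set Ω) :=
    fun v _ => cylinder_ofFn v ▸ measurableSet_cylinder _
  have hdisj : Set.Pairwise ↑(Finset.univ.filter (· ∈ S))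
      (Function.onFun Disjoint (fun v : Fin n → Bool => res n ⁻¹' {v})) :=
    fun v _ w _ hvw => Disjoint.preimage _ (Set.disjoint_singleton.mpr hvw)
  have hint : ∀ v ∈ Finset.univ.filter (· ∈ S),
      IntegrableOn g (res n ⁻¹' {v}) p' := fun v _ => hg.integrableOn
  rw [hU, integral_biUnion_finset _ hmeas hdisj hint]

lemma avg_condexp {p' : Measure Ω} [IsFiniteMeasure p']
    (hp' : ∀ x : List Bool, 0 < p' (_root_.cylinder x)) {g : Ω → ℝ}
    (hg : Integrable g p') (n : ℕ) :
    (fun ω => (∫ x in _root_.cylinder (seg ω n), g x ∂p') /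
        (p' (_root_.cylinder (seg ω n))).toReal) =ᵐ[p'] p'[g | 𝒢 n] := by
  classical
  set ψ : (Fin n → Bool) → ℝ :=
    fun v => (∫ x in res n ⁻¹' {v}, g x ∂p') / (p' (res n ⁻¹' {v})).toReal with hψdef
  have hφ : (fun ω => (∫ x in _root_.cylinder (seg ω n), g x ∂p') /
      (p' (_root_.cylinder (seg ω n))).toReal) = fun ω => ψ (res n ω) := by
    funext ω; rw [cylinder_seg]
  rw [hφ]
  have hatom : ∀ v : Fin n → Bool, (p' (res n ⁻¹' {v})).toReal ≠ 0 := fun v =>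
    ENNReal.toReal_ne_zero.mpr ⟨(cylinder_ofFn v ▸ (hp' (List.ofFn v))).ne', measure_ne_top _ _⟩
  have hatomm : ∀ v : Fin n → Bool, MeasurableSet (res n ⁻¹' {v}) :=
    fun v => cylinder_ofFn v ▸ measurableSet_cylinder _
  refine ae_eq_condExp_of_forall_setIntegral_eq (𝒢_le n) hg
    (fun s _ _ => (integrable_comp_res ψ).integrableOn) ?_
    ⟨_, (measurable_comp_res ψ).stronglyMeasurable, EventuallyEq.rfl⟩
  rintro s ⟨S, -, rfl⟩ -
  rw [setIntegral_preimage hg S, setIntegral_preimage (integrable_comp_res ψ) S]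
  refine Finset.sum_congr rfl fun v _ => ?_
  have hc : Set.EqOn (fun ω => ψ (res n ω)) (fun _ => ψ v) (res n ⁻¹' {v}) := by
    intro x hx
    simp only [Set.mem_preimage, Set.mem_singleton_iff] at hx
    simp [hx]
  rw [setIntegral_congr_fun (hatomm v) hc, setIntegral_const, smul_eq_mul, measureReal_def, hψdef,
    mul_comm, div_mul_cancel₀ _ (hatom v)]

def dens (p p' : Measure Ω) : Ω → ℝ := fun ω => (p.rnDeriv p' ω).toReal

def Fn (p p' : Measure Ω) (n : ℕ) (ω : Ω) : ℝ :=
  (p (_root_.cylinder (seg ω n))).toReal / (p' (_root_.cylinder (seg ω n))).toReal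

def Hn (p p' : Measure Ω) (n : ℕ) (ω : Ω) : ℝ :=
  (∫ x in _root_.cylinder (seg ω n), |dens p p' x - Fn p p' n x| ∂p') /
    (p' (_root_.cylinder (seg ω n))).toReal

lemma seg_eq_of_mem {ω x : Ω} {n : ℕ} (hx : x ∈ _root_.cylinder (seg ω n)) :
    seg x n = seg ω n := by
  rw [cylinder_seg] at hx
  simp only [Set.mem_preimage, Set.mem_singleton_iff] at hx
  rw [seg_def, seg_def, hx]

lemma key_bound (p p' : Measure Ω) [IsProbabilityMeasure p] [IsProbabilityMeasure p']
    (hp : ∀ x : List Bool, 0 < p (_root_.cylinder x))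
    (hp' : ∀ x : List Bool, 0 < p' (_root_.cylinder x)) (hac : p ≪ p')
    (ω : Ω) (n : ℕ) (A : Set Ω) :
    |((p[|_root_.cylinder (seg ω n)]) A).toReal -
        ((p'[|_root_.cylinder (seg ω n)]) A).toReal| ≤ Hn p p' n ω / Fn p p' n ω := by
  set Γ := _root_.cylinder (seg ω n) with hΓ
  have hΓm : MeasurableSet Γ := measurableSet_cylinder _
  set a := (p Γ).toReal with ha
  set b := (p' Γ).toReal with hb
  have hapos : 0 < a := ENNReal.toReal_pos (hp _).ne' (measure_ne_top _ _)
  have hbpos : 0 < b := ENNReal.toReal_pos (hp' _).ne' (measure_ne_top _ _)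
  set f := dens p p' with hfd
  have hfint : Integrable f p' := Measure.integrable_toReal_rnDeriv
  have hcond : ((p[|Γ]) A).toReal = (p (Γ ∩ A)).toReal / a := by
    rw [cond_apply hΓm, ENNReal.toReal_mul, ENNReal.toReal_inv, inv_mul_eq_div]
  have hcond' : ((p'[|Γ]) A).toReal = (p' (Γ ∩ A)).toReal / b := by
    rw [cond_apply hΓm, ENNReal.toReal_mul, ENNReal.toReal_inv, inv_mul_eq_div]
  set gg : Ω → ℝ := fun x => f x / a - 1 / b with hgg
  have hggint : Integrable gg p' := (hfint.div_const a).sub (integrable_const _)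
  have h1 : (p (Γ ∩ A)).toReal / a - (p' (Γ ∩ A)).toReal / b = ∫ x in Γ ∩ A, gg x ∂p' := by
    rw [hgg]
    rw [integral_sub ((hfint.div_const a).integrableOn)
      (integrableOn_const (measure_ne_top _ _))]
    have hpr : ∫ x in Γ ∩ A, f x ∂p' = (p (Γ ∩ A)).toReal := by
      rw [hfd]; simp only [dens]
      exact Measure.setIntegral_toReal_rnDeriv hac _
    rw [integral_div, setIntegral_const, smul_eq_mul, measureReal_def, hpr]
    ring
  have h2a : |∫ x in Γ ∩ A, gg x ∂p'| ≤ ∫ x in Γ ∩ A, |gg x| ∂p' := by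
    simpa [Real.norm_eq_abs] using norm_integral_le_integral_norm
      (μ := p'.restrict (Γ ∩ A)) gg
  have h2b : ∫ x in Γ ∩ A, |gg x| ∂p' ≤ ∫ x in Γ, |gg x| ∂p' :=
    setIntegral_mono_set (s := Γ ∩ A) (t := Γ) hggint.integrableOn.abs
      (Eventually.of_forall fun x => abs_nonneg (gg x))
      (HasSubset.Subset.eventuallyLE (Set.inter_subset_left))
  have h2 : |∫ x in Γ ∩ A, gg x ∂p'| ≤ ∫ x in Γ, |gg x| ∂p' := h2a.trans h2b
  have h3 : ∫ x in Γ, |gg x| ∂p' = (∫ x in Γ, |f x - a / b| ∂p') / a := by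
    rw [← integral_div]
    refine integral_congr_ae (Eventually.of_forall fun x => ?_)
    have hab : a / b / a = 1 / b := by
      rw [div_div, mul_comm, ← div_div, div_self hapos.ne']
    have he : gg x = (f x - a / b) / a := by
      rw [hgg]; show f x / a - 1 / b = _; rw [sub_div, hab]
    show |gg x| = |f x - a / b| / a
    rw [he, abs_div, abs_of_pos hapos]
  have h4 : ∫ x in Γ, |f x - a / b| ∂p' = ∫ x in Γ, |f x - Fn p p' n x| ∂p' := by
    refine setIntegral_congr_fun hΓm fun x hx => ?_
    have hseg : seg x n = seg ω n := seg_eq_of_mem hx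
    simp only [Fn, hseg, ← hΓ, ← ha, ← hb]
  have h5 : ∫ x in Γ, |f x - Fn p p' n x| ∂p' = Hn p p' n ω * b := by
    rw [Hn, ← hΓ]
    rw [div_mul_cancel₀ _ hbpos.ne']
  have hFn : Fn p p' n ω = a / b := rfl
  calc |((p[|Γ]) A).toReal - ((p'[|Γ]) A).toReal|
      = |∫ x in Γ ∩ A, gg x ∂p'| := by rw [hcond, hcond', h1]
    _ ≤ ∫ x in Γ, |gg x| ∂p' := h2
    _ = Hn p p' n ω * b / a := by rw [h3, h4, h5]
    _ = Hn p p' n ω / Fn p p' n ω := by rw [hFn, div_div_eq_mul_div]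

lemma measurable_dens (p p' : Measure Ω) : Measurable (dens p p') :=
  (Measure.measurable_rnDeriv p p').ennreal_toReal

lemma integrable_Fn (p p' : Measure Ω) [IsFiniteMeasure p'] (n : ℕ) :
    Integrable (Fn p p' n) p' :=
  integrable_comp_res (p' := p') (fun v : Fin n → Bool =>
    (p (_root_.cylinder (List.ofFn v))).toReal / (p' (_root_.cylinder (List.ofFn v))).toReal)

lemma measurable𝒢_Fn (p p' : Measure Ω) (n : ℕ) : Measurable[𝒢 n] (Fn p p' n) :=
  measurable_comp_res (fun v : Fin n → Bool =>
    (p (_root_.cylinder (List.ofFn v))).toReal / (p' (_root_.cylinder (List.ofFn v))).toReal)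

lemma Fn_eq_condexp (p p' : Measure Ω) [IsProbabilityMeasure p] [IsProbabilityMeasure p']
    (hp' : ∀ x : List Bool, 0 < p' (_root_.cylinder x)) (hac : p ≪ p') (n : ℕ) :
    Fn p p' n =ᵐ[p'] p'[dens p p' | 𝒢 n] := by
  have h := avg_condexp hp' (Measure.integrable_toReal_rnDeriv (μ := p) (ν := p')) n
  have he : (fun ω => (∫ x in _root_.cylinder (seg ω n), (p.rnDeriv p' x).toReal ∂p') /
      (p' (_root_.cylinder (seg ω n))).toReal) = Fn p p' n := by
    funext ω
    rw [Measure.setIntegral_toReal_rnDeriv hac]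
    rfl
  rw [he] at h
  exact h

end

end BD

set_option maxHeartbeats 2000000 in
/-- Blackwell–Dubins merging: if `p` and `p'` are open-minded probability measures on
Cantor space and `p` is absolutely continuous with respect to `p'`, then `p`-almost surely
the total variational distance between the conditional measures given the first `n` bits
tends to `0`. -/
theorem merging_of_opinions (p p' : Measure (ℕ → Bool))
    [IsProbabilityMeasure p] [IsProbabilityMeasure p']
    (hp : ∀ x : List Bool, 0 < p (cylinder x))
    (hp' : ∀ x : List Bool, 0 < p' (cylinder x))
    (hac : p ≪ p') :
    ∀ᵐ ω ∂p, Tendsto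
      (fun n : ℕ => ⨆ (A : Set (ℕ → Bool)) (_ : MeasurableSet A),
        |((p[|cylinder (seg ω n)]) A).toReal - ((p'[|cylinder (seg ω n)]) A).toReal|)
      atTop (nhds 0) := by
  classical
  set f := BD.dens p p' with hfd
  have hfint : Integrable f p' := Measure.integrable_toReal_rnDeriv
  have hfmeas : Measurable f := BD.measurable_dens p p'
  set G : ℕ → BD.Ω → ℝ := fun n x => |f x - BD.Fn p p' n x| with hGd
  have hFint : ∀ n, Integrable (BD.Fn p p' n) p' := fun n => BD.integrable_Fn p p' n
  have hFmeas𝒢 : ∀ n, Measurable[BD.𝒢 n] (BD.Fn p p' n) := fun n => BD.measurable𝒢_Fn p p' n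
  have hFmeas : ∀ n, Measurable (BD.Fn p p' n) := fun n => (hFmeas𝒢 n).mono (BD.𝒢_le n) le_rfl
  have hGint : ∀ n, Integrable (G n) p' := fun n => (hfint.sub (hFint n)).abs
  have hGmeas : ∀ n, Measurable (G n) := fun n =>
    (continuous_abs.measurable).comp (hfmeas.sub (hFmeas n))
  have hsup : (⨆ n, (BD.ℱ n : MeasurableSpace BD.Ω)) = (inferInstance : MeasurableSpace BD.Ω) :=
    BD.iSup_𝒢
  have hfsm : StronglyMeasurable[⨆ n, (BD.ℱ n : MeasurableSpace BD.Ω)] f := by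
    rw [hsup]; exact hfmeas.stronglyMeasurable
  have hGsm : ∀ m, StronglyMeasurable[⨆ n, (BD.ℱ n : MeasurableSpace BD.Ω)] (G m) := by
    intro m; rw [hsup]; exact (hGmeas m).stronglyMeasurable
  -- Lévy martingale convergence
  have hLevyF : ∀ᵐ ω ∂p', Tendsto (fun n => (p'[f | BD.𝒢 n]) ω) atTop (nhds (f ω)) :=
    hfint.tendsto_ae_condExp hfsm
  have hLevyG : ∀ᵐ ω ∂p', ∀ m, Tendsto (fun n => (p'[G m | BD.𝒢 n]) ω) atTop (nhds (G m ω)) :=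
    ae_all_iff.2 fun m => (hGint m).tendsto_ae_condExp (hGsm m)
  -- identification of conditional expectations
  have hFc : ∀ᵐ ω ∂p', ∀ n, BD.Fn p p' n ω = (p'[f | BD.𝒢 n]) ω :=
    ae_all_iff.2 fun n => BD.Fn_eq_condexp p p' hp' hac n
  have hHc : ∀ᵐ ω ∂p', ∀ n, BD.Hn p p' n ω = (p'[G n | BD.𝒢 n]) ω :=
    ae_all_iff.2 fun n => BD.avg_condexp hp' (hGint n) n
  have hHnn : ∀ᵐ ω ∂p', ∀ n, 0 ≤ (p'[G n | BD.𝒢 n]) ω :=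
    ae_all_iff.2 fun n => condExp_nonneg (Eventually.of_forall fun x => abs_nonneg _)
  -- chain inequality
  have hchain : ∀ᵐ ω ∂p', ∀ m n, m ≤ n →
      (p'[G n | BD.𝒢 n]) ω ≤ (p'[G m | BD.𝒢 n]) ω + |BD.Fn p p' m ω - BD.Fn p p' n ω| := by
    rw [ae_all_iff]
    intro m
    rw [ae_all_iff]
    intro n
    by_cases hmn : m ≤ n
    · set h : BD.Ω → ℝ := fun x => |BD.Fn p p' m x - BD.Fn p p' n x| with hhd
      have hint2 : Integrable h p' := ((hFint m).sub (hFint n)).abs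
      have hsm2 : StronglyMeasurable[BD.𝒢 n] h :=
        Measurable.stronglyMeasurable
          ((continuous_abs.measurable).comp
            (Measurable.sub ((hFmeas𝒢 m).mono (BD.𝒢_mono hmn) le_rfl) (hFmeas𝒢 n)))
      have hce : p'[h | BD.𝒢 n] = h :=
        condExp_of_stronglyMeasurable (BD.𝒢_le n) hsm2 hint2
      have hptw : G n ≤ᵐ[p'] G m + h := Eventually.of_forall fun x => by
        simpa [hGd, hhd] using abs_sub_le (f x) (BD.Fn p p' m x) (BD.Fn p p' n x)
      have h1 : p'[G n | BD.𝒢 n] ≤ᵐ[p'] p'[G m + h | BD.𝒢 n] :=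
        condExp_mono (hGint n) ((hGint m).add hint2) hptw
      have h2 : p'[G m + h | BD.𝒢 n] =ᵐ[p'] p'[G m | BD.𝒢 n] + p'[h | BD.𝒢 n] :=
        condExp_add (hGint m) hint2 _
      filter_upwards [h1, h2] with ω h1ω h2ω _
      calc (p'[G n | BD.𝒢 n]) ω ≤ (p'[G m + h | BD.𝒢 n]) ω := h1ω
        _ = (p'[G m | BD.𝒢 n]) ω + (p'[h | BD.𝒢 n]) ω := by rw [h2ω]; rfl
        _ = (p'[G m | BD.𝒢 n]) ω + |BD.Fn p p' m ω - BD.Fn p p' n ω| := by rw [hce]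
    · exact Eventually.of_forall fun ω h => absurd h hmn
  -- positivity of the density, p-a.e.
  have hfpos : ∀ᵐ ω ∂p, 0 < f ω := by
    have h1 : ∀ᵐ ω ∂p, 0 < p.rnDeriv p' ω := by
      haveI := Measure.haveLebesgueDecomposition_of_sigmaFinite (μ := p) (ν := p')
      exact Measure.rnDeriv_pos hac
    have h2 : ∀ᵐ ω ∂p, p.rnDeriv p' ω < ⊤ :=
      (Measure.rnDeriv_lt_top p p').filter_mono hac.ae_le
    filter_upwards [h1, h2] with ω hω1 hω2
    exact ENNReal.toReal_pos hω1.ne' hω2.ne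
  -- transfer everything to p and conclude pointwise
  filter_upwards [hLevyF.filter_mono hac.ae_le, hLevyG.filter_mono hac.ae_le,
    hFc.filter_mono hac.ae_le, hHc.filter_mono hac.ae_le, hHnn.filter_mono hac.ae_le,
    hchain.filter_mono hac.ae_le, hfpos] with ω hLF hLG hFcω hHcω hHnnω hchainω hfposω
  have hFt : Tendsto (fun n => BD.Fn p p' n ω) atTop (nhds (f ω)) := by
    have : (fun n => BD.Fn p p' n ω) = fun n => (p'[f | BD.𝒢 n]) ω := funext fun n => hFcω n
    rw [this]; exact hLF
  have hHnn0 : ∀ n, 0 ≤ BD.Hn p p' n ω := fun n => (hHcω n) ▸ hHnnω n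
  -- Hn → 0
  have hHt : Tendsto (fun n => BD.Hn p p' n ω) atTop (nhds 0) := by
    refine tendsto_order.2 ⟨fun c hc => Eventually.of_forall fun n =>
      lt_of_lt_of_le hc (hHnn0 n), fun c hc => ?_⟩
    obtain ⟨m, hm⟩ := (Metric.tendsto_atTop.mp hFt (c / 3) (by linarith))
    have hGm : G m ω < c / 3 := by
      have := hm m le_rfl
      rw [Real.dist_eq] at this
      simpa [hGd, abs_sub_comm] using this
    have e1 : ∀ᶠ n in atTop, (p'[G m | BD.𝒢 n]) ω < c / 2 :=
      (hLG m).eventually_lt_const (by linarith)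
    have e2 : ∀ᶠ n in atTop, |BD.Fn p p' m ω - BD.Fn p p' n ω| < c / 2 := by
      have ht : Tendsto (fun n => |BD.Fn p p' m ω - BD.Fn p p' n ω|) atTop
          (nhds |BD.Fn p p' m ω - f ω|) := (tendsto_const_nhds.sub hFt).abs
      refine ht.eventually_lt_const ?_
      have : |BD.Fn p p' m ω - f ω| = G m ω := by rw [hGd]; rw [abs_sub_comm]
      rw [this]; linarith
    filter_upwards [e1, e2, eventually_ge_atTop m] with n h1 h2 h3
    calc BD.Hn p p' n ω = (p'[G n | BD.𝒢 n]) ω := hHcω n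
      _ ≤ (p'[G m | BD.𝒢 n]) ω + |BD.Fn p p' m ω - BD.Fn p p' n ω| := hchainω m n h3
      _ < c := by linarith
  -- Fn is positive
  have hFpos : ∀ n, 0 < BD.Fn p p' n ω := fun n =>
    div_pos (ENNReal.toReal_pos (hp _).ne' (measure_ne_top _ _))
      (ENNReal.toReal_pos (hp' _).ne' (measure_ne_top _ _))
  -- supremum bounds
  have hub : ∀ n (A : Set (ℕ → Bool)),
      (⨆ (_ : MeasurableSet A),
        |((p[|cylinder (seg ω n)]) A).toReal - ((p'[|cylinder (seg ω n)]) A).toReal|)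
        ≤ BD.Hn p p' n ω / BD.Fn p p' n ω := by
    intro n A
    by_cases hA : MeasurableSet A
    · rw [ciSup_pos hA]
      exact BD.key_bound p p' hp hp' hac ω n A
    · haveI : IsEmpty (MeasurableSet A) := ⟨hA⟩
      rw [Real.iSup_of_isEmpty]
      exact div_nonneg (hHnn0 n) (hFpos n).le
  have hbdd : ∀ n, BddAbove (Set.range fun A : Set (ℕ → Bool) =>
      ⨆ (_ : MeasurableSet A),
        |((p[|cylinder (seg ω n)]) A).toReal - ((p'[|cylinder (seg ω n)]) A).toReal|) := by
    intro n
    refine ⟨BD.Hn p p' n ω / BD.Fn p p' n ω, ?_⟩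
    rintro x ⟨A, rfl⟩
    exact hub n A
  have hS_le : ∀ n, (⨆ (A : Set (ℕ → Bool)) (_ : MeasurableSet A),
      |((p[|cylinder (seg ω n)]) A).toReal - ((p'[|cylinder (seg ω n)]) A).toReal|)
      ≤ BD.Hn p p' n ω / BD.Fn p p' n ω := fun n => ciSup_le (hub n)
  have hS_nn : ∀ n, 0 ≤ ⨆ (A : Set (ℕ → Bool)) (_ : MeasurableSet A),
      |((p[|cylinder (seg ω n)]) A).toReal - ((p'[|cylinder (seg ω n)]) A).toReal| := by
    intro n
    have h0 : (⨆ (_ : MeasurableSet (∅ : Set (ℕ → Bool))),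
        |((p[|cylinder (seg ω n)]) ∅).toReal - ((p'[|cylinder (seg ω n)]) ∅).toReal|) = 0 := by
      rw [ciSup_pos MeasurableSet.empty]
      simp
    have := le_ciSup (hbdd n) (∅ : Set (ℕ → Bool))
    rw [h0] at this
    exact this
  have hquot : Tendsto (fun n => BD.Hn p p' n ω / BD.Fn p p' n ω) atTop (nhds 0) := by
    have := hHt.div hFt hfposω.ne'
    simpa [Pi.div_def] using this
  exact squeeze_zero hS_nn hS_le hquot
end

section
/- Let p and p' be open-minded Borel probability measures on the Cantor space ℕ → Bool such that p is absolutely continuous with respect to p' and p' is absolutely continuous with respect to p. Then both p-almost surely and p'-almost surely, sup over all Borel sets A of |p(A | Γ_{ω|n}) − p'(A | Γ_{ω|n})| tends to 0 as n → ∞. -/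
open MeasureTheory ProbabilityTheory Filter

namespace Merging

abbrev X : Type := ℕ → Bool

/-- projection onto the first `n` coordinates -/
def proj (n : ℕ) : X → (Fin n → Bool) := fun ω i => ω i

lemma measurable_proj (n : ℕ) : Measurable (proj n) :=
  measurable_pi_lambda _ fun i => measurable_pi_apply _

lemma measurableSet_fin {n : ℕ} (B : Set (Fin n → Bool)) : MeasurableSet B :=
  B.toFinite.measurableSet

lemma cylinder_ofFn {n : ℕ} (b : Fin n → Bool) :
    _root_.cylinder (List.ofFn b) = proj n ⁻¹' {b} := by
  ext ω
  simp only [_root_.cylinder, Set.mem_setOf_eq, Set.mem_preimage, Set.mem_singleton_iff, proj,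
    funext_iff]
  constructor
  · intro h i
    have := h (Fin.cast (List.length_ofFn (f := b)).symm i)
    simpa [List.get_ofFn] using this
  · intro h i
    rw [List.get_ofFn]
    exact h (Fin.cast (List.length_ofFn (f := b)) i)

lemma cylinder_seg (ω : X) (n : ℕ) : _root_.cylinder (seg ω n) = proj n ⁻¹' {proj n ω} := by
  unfold seg
  rw [cylinder_ofFn]
  rfl

lemma measurableSet_cylinder (x : List Bool) : MeasurableSet (_root_.cylinder x) := by
  have : _root_.cylinder x = ⋂ i : Fin x.length, (fun ω : X => ω i) ⁻¹' {x.get i} := by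
    ext ω; simp [_root_.cylinder, List.get_eq_getElem]
  rw [this]
  exact MeasurableSet.iInter fun i => (measurable_pi_apply _) (measurableSet_singleton _)

/-- the filtration of the first `n` coordinates -/
def F (n : ℕ) : MeasurableSpace X := MeasurableSpace.comap (proj n) inferInstance

lemma F_le (n : ℕ) : F n ≤ (inferInstance : MeasurableSpace X) :=
  (measurable_proj n).comap_le

lemma F_mono : Monotone F := by
  intro n m hnm
  have h : proj n = (fun v : Fin m → Bool => fun i : Fin n => v (Fin.castLE hnm i)) ∘ proj m := rfl
  rw [F, h, ← MeasurableSpace.comap_comp]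
  exact MeasurableSpace.comap_mono fun s _ => measurableSet_fin _

def Ffil : Filtration ℕ (inferInstance : MeasurableSpace X) := ⟨F, F_mono, F_le⟩

lemma measurable_proj_F (n : ℕ) : Measurable[F n] (proj n) :=
  Measurable.of_comap_le le_rfl

lemma iSup_F : (⨆ n, F n) = (inferInstance : MeasurableSpace X) := by
  refine le_antisymm (iSup_le F_le) ?_
  have hpi : (inferInstance : MeasurableSpace X) =
      ⨆ i : ℕ, MeasurableSpace.comap (fun ω : X => ω i) inferInstance := rfl
  rw [hpi]
  refine iSup_le fun i => ?_
  have heq : (fun ω : X => ω i) =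
      (fun v : Fin (i + 1) → Bool => v ⟨i, Nat.lt_succ_self i⟩) ∘ proj (i + 1) := rfl
  calc MeasurableSpace.comap (fun ω : X => ω i) inferInstance
      = MeasurableSpace.comap (proj (i + 1))
        (MeasurableSpace.comap (fun v : Fin (i + 1) → Bool => v ⟨i, Nat.lt_succ_self i⟩)
          inferInstance) := by rw [MeasurableSpace.comap_comp]; rfl
    _ ≤ F (i + 1) := MeasurableSpace.comap_mono fun s _ => measurableSet_fin _
    _ ≤ ⨆ n, F n := le_iSup F (i + 1)


variable {μ : Measure X} [IsProbabilityMeasure μ]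

lemma preimage_singleton_pos (hμ : ∀ x : List Bool, 0 < μ (_root_.cylinder x))
    {n : ℕ} (b : Fin n → Bool) : 0 < μ (proj n ⁻¹' {b}) := by
  rw [← cylinder_ofFn]; exact hμ _

lemma setIntegral_preimage (n : ℕ) (g : X → ℝ) (hg : Integrable g μ) (B : Set (Fin n → Bool)) :
    ∫ x in proj n ⁻¹' B, g x ∂μ
      = ∑ b : Fin n → Bool, ∫ x in proj n ⁻¹' B ∩ proj n ⁻¹' {b}, g x ∂μ := by
  have hU : proj n ⁻¹' B = ⋃ b : Fin n → Bool, (proj n ⁻¹' B ∩ proj n ⁻¹' {b}) := by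
    ext ω; simp
  have hm : ∀ b : Fin n → Bool, MeasurableSet (proj n ⁻¹' B ∩ proj n ⁻¹' {b}) :=
    fun b => ((measurable_proj n) (measurableSet_fin B)).inter
      ((measurable_proj n) (measurableSet_fin {b}))
  have hd : Pairwise (Function.onFun Disjoint
      fun b : Fin n → Bool => proj n ⁻¹' B ∩ proj n ⁻¹' {b}) := fun b b' hne =>
    (Set.disjoint_singleton.mpr hne |>.preimage (proj n)).mono
      Set.inter_subset_right Set.inter_subset_right
  calc ∫ x in proj n ⁻¹' B, g x ∂μ
      = ∫ x in ⋃ b : Fin n → Bool, (proj n ⁻¹' B ∩ proj n ⁻¹' {b}), g x ∂μ := by rw [← hU]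
    _ = ∑' b : Fin n → Bool, ∫ x in proj n ⁻¹' B ∩ proj n ⁻¹' {b}, g x ∂μ :=
        integral_iUnion hm hd (hU ▸ hg.integrableOn)
    _ = ∑ b : Fin n → Bool, ∫ x in proj n ⁻¹' B ∩ proj n ⁻¹' {b}, g x ∂μ := tsum_fintype _

lemma condexp_eq (hμ : ∀ x : List Bool, 0 < μ (_root_.cylinder x))
    (g : X → ℝ) (hg : Integrable g μ) (n : ℕ) :
    μ[g | F n] =ᵐ[μ] fun ω =>
      (∫ x in _root_.cylinder (seg ω n), g x ∂μ) / (μ (_root_.cylinder (seg ω n))).toReal := by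
  set H : (Fin n → Bool) → ℝ :=
    fun b => (∫ x in proj n ⁻¹' {b}, g x ∂μ) / (μ (proj n ⁻¹' {b})).toReal with hH
  have hHmeas : Measurable H := fun s _ => measurableSet_fin _
  have hint : Integrable (fun ω => H (proj n ω)) μ := by
    have hsum : (fun ω => H (proj n ω))
        = fun ω => ∑ b : Fin n → Bool, (proj n ⁻¹' {b}).indicator (fun _ => H b) ω := by
      funext ω
      rw [Finset.sum_eq_single_of_mem (proj n ω) (Finset.mem_univ _)]
      · exact (Set.indicator_of_mem rfl _).symm
      · intro b _ hb
        exact Set.indicator_of_notMem (by simpa using (Ne.symm hb)) _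
    rw [hsum]
    exact integrable_finset_sum _ fun b _ =>
      (integrable_const (H b)).indicator ((measurable_proj n) (measurableSet_fin _))
  have key : (fun ω => H (proj n ω)) =ᵐ[μ] μ[g | F n] := by
    refine ae_eq_condExp_of_forall_setIntegral_eq (F_le n) hg
      (fun s _ _ => hint.integrableOn) ?_ ?_
    · rintro s ⟨B, -, rfl⟩ -
      rw [setIntegral_preimage n _ hint B, setIntegral_preimage n g hg B]
      refine Finset.sum_congr rfl fun b _ => ?_
      by_cases hb : b ∈ B
      · have hEq : proj n ⁻¹' B ∩ proj n ⁻¹' {b} = proj n ⁻¹' {b} := by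
          rw [← Set.preimage_inter,
            Set.inter_eq_self_of_subset_right (Set.singleton_subset_iff.mpr hb)]
        rw [hEq]
        have hconst : ∫ x in proj n ⁻¹' {b}, H (proj n x) ∂μ
            = (μ (proj n ⁻¹' {b})).toReal • H b := by
          rw [setIntegral_congr_fun ((measurable_proj n) (measurableSet_fin {b}))
            (fun x hx => by rw [show proj n x = b from hx])]
          exact setIntegral_const _
        rw [hconst, hH]
        have hpos : (μ (proj n ⁻¹' {b})).toReal ≠ 0 :=
          (ENNReal.toReal_pos (preimage_singleton_pos hμ b).ne' (measure_ne_top μ _)).ne'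
        rw [smul_eq_mul]
        field_simp
      · have hEq : proj n ⁻¹' B ∩ proj n ⁻¹' {b} = ∅ := by
          rw [← Set.preimage_inter, Set.inter_singleton_eq_empty.mpr hb, Set.preimage_empty]
        rw [hEq]
        simp
    · exact StronglyMeasurable.aestronglyMeasurable
        (Measurable.stronglyMeasurable (hHmeas.comp (measurable_proj_F n)))
  have hfun : (fun ω : X =>
      (∫ x in _root_.cylinder (seg ω n), g x ∂μ) / (μ (_root_.cylinder (seg ω n))).toReal)
      = fun ω => H (proj n ω) := by
    funext ω; rw [cylinder_seg]
  rw [hfun]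
  exact key.symm

lemma tendsto_average (hμ : ∀ x : List Bool, 0 < μ (_root_.cylinder x))
    (g : X → ℝ) (hg : Integrable g μ) (hgm : StronglyMeasurable g) :
    ∀ᵐ ω ∂μ, Tendsto (fun n =>
        (∫ x in _root_.cylinder (seg ω n), g x ∂μ) / (μ (_root_.cylinder (seg ω n))).toReal)
      atTop (nhds (g ω)) := by
  have hsupeq : (⨆ n, (Ffil n : MeasurableSpace X)) = (inferInstance : MeasurableSpace X) :=
    iSup_F
  have hsup : μ[g | ⨆ n, (Ffil n : MeasurableSpace X)] =ᵐ[μ] g := by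
    rw [hsupeq]
    exact Filter.EventuallyEq.of_eq (condExp_of_stronglyMeasurable le_rfl hgm hg)
  have hlevy := tendsto_ae_condExp (μ := μ) (ℱ := Ffil) g
  have heqn : ∀ᵐ ω ∂μ, ∀ n, (μ[g | Ffil n]) ω
      = (∫ x in _root_.cylinder (seg ω n), g x ∂μ) / (μ (_root_.cylinder (seg ω n))).toReal :=
    ae_all_iff.mpr fun n => condexp_eq hμ g hg n
  filter_upwards [hlevy, heqn, hsup] with ω h1 h2 h3
  rw [h3] at h1
  exact h1.congr h2


lemma key_bound (p p' : Measure X) [IsProbabilityMeasure p] [IsProbabilityMeasure p']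
    (hac : p ≪ p') (Γ : Set X) (hΓ : MeasurableSet Γ) (hΓp : 0 < p Γ) (hΓp' : 0 < p' Γ)
    (q : ℝ) (A : Set X) (hA : MeasurableSet A) :
    |((p[|Γ]) A).toReal - ((p'[|Γ]) A).toReal| ≤
      ((p Γ).toReal / (p' Γ).toReal)⁻¹ *
        ((∫ x in Γ, |(p.rnDeriv p' x).toReal - q| ∂p') / (p' Γ).toReal
          + |q - (p Γ).toReal / (p' Γ).toReal|) := by
  set f : X → ℝ := fun x => (p.rnDeriv p' x).toReal with hfdef
  have hfint : Integrable f p' := Measure.integrable_toReal_rnDeriv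
  set P := (p Γ).toReal with hPdef
  set c := (p' Γ).toReal with hcdef
  have hP : 0 < P := ENNReal.toReal_pos hΓp.ne' (measure_ne_top _ _)
  have hc : 0 < c := ENNReal.toReal_pos hΓp'.ne' (measure_ne_top _ _)
  set r := P / c with hrdef
  have hr : 0 < r := div_pos hP hc
  set a := (p (Γ ∩ A)).toReal with hadef
  set b := (p' (Γ ∩ A)).toReal with hbdef
  have h1 : ((p[|Γ]) A).toReal = a / P := by
    rw [cond_apply hΓ p A, ENNReal.toReal_mul, ENNReal.toReal_inv, div_eq_inv_mul]
  have h1' : ((p'[|Γ]) A).toReal = b / c := by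
    rw [cond_apply hΓ p' A, ENNReal.toReal_mul, ENNReal.toReal_inv, div_eq_inv_mul]
  have ha : a = ∫ x in Γ ∩ A, f x ∂p' :=
    (Measure.setIntegral_toReal_rnDeriv hac (Γ ∩ A)).symm
  have hsub : ∫ x in Γ ∩ A, (f x - r) ∂p' = a - b * r := by
    rw [integral_sub hfint.integrableOn
      (integrableOn_const (measure_ne_top _ _))]
    rw [← ha, setIntegral_const, smul_eq_mul]; rfl
  have hmain : a / P - b / c = (∫ x in Γ ∩ A, (f x - r) ∂p') / P := by
    rw [hsub, hrdef]
    field_simp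
  have habs : |∫ x in Γ ∩ A, (f x - r) ∂p'| ≤ ∫ x in Γ, |f x - r| ∂p' := by
    calc |∫ x in Γ ∩ A, (f x - r) ∂p'| ≤ ∫ x in Γ ∩ A, |f x - r| ∂p' := by
          simpa [Real.norm_eq_abs] using
            norm_integral_le_integral_norm (μ := p'.restrict (Γ ∩ A)) (fun x => f x - r)
      _ ≤ ∫ x in Γ, |f x - r| ∂p' :=
          setIntegral_mono_set ((hfint.sub (integrable_const r)).abs.integrableOn)
            (Filter.Eventually.of_forall fun x => abs_nonneg _)
            (HasSubset.Subset.eventuallyLE Set.inter_subset_left)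
  have htri : ∫ x in Γ, |f x - r| ∂p' ≤ (∫ x in Γ, |f x - q| ∂p') + c * |q - r| := by
    have hmono : ∫ x in Γ, |f x - r| ∂p' ≤ ∫ x in Γ, (|f x - q| + |q - r|) ∂p' := by
      refine integral_mono ((hfint.sub (integrable_const r)).abs.integrableOn)
        (((hfint.sub (integrable_const q)).abs.integrableOn).add
          (integrableOn_const (measure_ne_top _ _))) ?_
      intro x
      exact abs_sub_le _ q _
    have hi1 : IntegrableOn (fun x => |f x - q|) Γ p' :=
      (hfint.sub (integrable_const q)).abs.integrableOn
    have hi2 : IntegrableOn (fun _ : X => |q - r|) Γ p' :=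
      integrableOn_const (measure_ne_top _ _)
    have hadd : ∫ x in Γ, (|f x - q| + |q - r|) ∂p'
        = (∫ x in Γ, |f x - q| ∂p') + c * |q - r| := by
      rw [integral_add hi1 hi2, setIntegral_const, smul_eq_mul]; rfl
    linarith
  calc |((p[|Γ]) A).toReal - ((p'[|Γ]) A).toReal|
      = |∫ x in Γ ∩ A, (f x - r) ∂p'| / P := by
        rw [h1, h1', hmain, abs_div, abs_of_pos hP]
    _ ≤ ((∫ x in Γ, |f x - q| ∂p') + c * |q - r|) / P := by
        gcongr
        exact habs.trans htri
    _ = r⁻¹ * ((∫ x in Γ, |f x - q| ∂p') / c + |q - r|) := by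
        rw [hrdef]
        field_simp

lemma tendsto_of_bounds (S r : ℕ → ℝ) (aq : ℚ → ℕ → ℝ) (L : ℝ) (hL : 0 < L)
    (hrpos : ∀ n, 0 < r n) (hS0 : ∀ n, 0 ≤ S n)
    (hSle : ∀ (q : ℚ) (n : ℕ), S n ≤ (r n)⁻¹ * (aq q n + |(q : ℝ) - r n|))
    (hr : Tendsto r atTop (nhds L))
    (haq : ∀ q : ℚ, Tendsto (aq q) atTop (nhds |L - (q : ℝ)|)) :
    Tendsto S atTop (nhds 0) := by
  rw [tendsto_order]
  constructor
  · intro x hx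
    exact Filter.Eventually.of_forall fun n => lt_of_lt_of_le hx (hS0 n)
  · intro ε hε
    obtain ⟨q, hq⟩ := exists_rat_near L (show (0:ℝ) < ε * L / 4 by positivity)
    have hlim : Tendsto (fun n => (r n)⁻¹ * (aq q n + |(q:ℝ) - r n|)) atTop
        (nhds (L⁻¹ * (|L - (q:ℝ)| + |(q:ℝ) - L|))) :=
      (hr.inv₀ hL.ne').mul ((haq q).add ((tendsto_const_nhds.sub hr).abs))
    have hlt : L⁻¹ * (|L - (q:ℝ)| + |(q:ℝ) - L|) < ε := by
      rw [abs_sub_comm (q:ℝ) L]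
      have h2 : |L - (q:ℝ)| < ε * L / 4 := hq
      have h3 : L⁻¹ * (|L - (q:ℝ)| + |L - (q:ℝ)|) = 2 * |L - (q:ℝ)| / L := by
        field_simp; ring
      rw [h3]
      calc 2 * |L - (q:ℝ)| / L < 2 * (ε * L / 4) / L := by gcongr
        _ = ε / 2 := by field_simp; ring
        _ < ε := by linarith
    filter_upwards [hlim.eventually_lt_const hlt] with n hn
    exact lt_of_le_of_lt (hSle q n) hn


end Merging

/-- If `p` and `p'` are open-minded probability measures on Cantor space that are mutually
absolutely continuous, then both `p`-almost surely and `p'`-almost surely the total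
variational distance between the conditional measures given the first `n` bits tends to `0`. -/
theorem mutual_merging_of_opinions (p p' : Measure (ℕ → Bool))
    [IsProbabilityMeasure p] [IsProbabilityMeasure p']
    (hp : ∀ x : List Bool, 0 < p (cylinder x))
    (hp' : ∀ x : List Bool, 0 < p' (cylinder x))
    (hac : p ≪ p') (hac' : p' ≪ p) :
    (∀ᵐ ω ∂p, Tendsto
      (fun n : ℕ => ⨆ (A : Set (ℕ → Bool)) (_ : MeasurableSet A),
        |((p[|cylinder (seg ω n)]) A).toReal - ((p'[|cylinder (seg ω n)]) A).toReal|)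
      atTop (nhds 0)) ∧
    (∀ᵐ ω ∂p', Tendsto
      (fun n : ℕ => ⨆ (A : Set (ℕ → Bool)) (_ : MeasurableSet A),
        |((p[|cylinder (seg ω n)]) A).toReal - ((p'[|cylinder (seg ω n)]) A).toReal|)
      atTop (nhds 0)) := by
  classical
  set f : (ℕ → Bool) → ℝ := fun x => (p.rnDeriv p' x).toReal with hfdef
  have hfint : Integrable f p' := Measure.integrable_toReal_rnDeriv
  have hfmeas : StronglyMeasurable f :=
    (Measure.measurable_rnDeriv p p').ennreal_toReal.stronglyMeasurable
  have h1 : ∀ᵐ ω ∂p', Tendsto (fun n =>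
      (∫ x in cylinder (seg ω n), f x ∂p') / (p' (cylinder (seg ω n))).toReal)
      atTop (nhds (f ω)) :=
    Merging.tendsto_average hp' f hfint hfmeas
  have h2 : ∀ᵐ ω ∂p', ∀ q : ℚ, Tendsto (fun n =>
      (∫ x in cylinder (seg ω n), |f x - (q : ℝ)| ∂p') / (p' (cylinder (seg ω n))).toReal)
      atTop (nhds |f ω - (q : ℝ)|) :=
    ae_all_iff.mpr fun q => Merging.tendsto_average hp' _
      ((hfint.sub (integrable_const _)).abs)
      (((Measure.measurable_rnDeriv p p').ennreal_toReal.sub measurable_const).abs.stronglyMeasurable)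
  have h3 : ∀ᵐ ω ∂p', 0 < f ω := by
    haveI : p.HaveLebesgueDecomposition p' := Measure.haveLebesgueDecomposition_of_finiteMeasure
    have hpos := Measure.rnDeriv_pos (μ := p) (ν := p') hac
    have hlt := Measure.rnDeriv_lt_top p p'
    filter_upwards [hac'.ae_le hpos, hlt] with ω hω hω'
    exact ENNReal.toReal_pos hω.ne' hω'.ne
  have main : ∀ᵐ ω ∂p', Tendsto
      (fun n : ℕ => ⨆ (A : Set (ℕ → Bool)) (_ : MeasurableSet A),
        |((p[|cylinder (seg ω n)]) A).toReal - ((p'[|cylinder (seg ω n)]) A).toReal|)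
      atTop (nhds 0) := by
    filter_upwards [h1, h2, h3] with ω hω1 hω2 hω3
    set r : ℕ → ℝ :=
      fun n => (p (cylinder (seg ω n))).toReal / (p' (cylinder (seg ω n))).toReal with hrdef
    have hr : Tendsto r atTop (nhds (f ω)) := by
      refine hω1.congr fun n => ?_
      rw [hrdef]
      rw [Measure.setIntegral_toReal_rnDeriv hac]; rfl
    have hrpos : ∀ n, 0 < r n := fun n =>
      div_pos (ENNReal.toReal_pos (hp _).ne' (measure_ne_top _ _))
        (ENNReal.toReal_pos (hp' _).ne' (measure_ne_top _ _))
    refine Merging.tendsto_of_bounds _ r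
      (fun q n =>
        (∫ x in cylinder (seg ω n), |f x - (q : ℝ)| ∂p') / (p' (cylinder (seg ω n))).toReal)
      (f ω) hω3 hrpos ?_ ?_ hr hω2
    · intro n
      exact Real.iSup_nonneg fun A => Real.iSup_nonneg fun _ => abs_nonneg _
    · intro q n
      have hRHS : 0 ≤ (r n)⁻¹ *
          ((∫ x in cylinder (seg ω n), |f x - (q : ℝ)| ∂p') / (p' (cylinder (seg ω n))).toReal
            + |(q : ℝ) - r n|) := by
        refine mul_nonneg (inv_nonneg.mpr (hrpos n).le) (add_nonneg ?_ (abs_nonneg _))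
        exact div_nonneg (integral_nonneg fun x => abs_nonneg _) ENNReal.toReal_nonneg
      refine Real.iSup_le (fun A => Real.iSup_le (fun hA => ?_) hRHS) hRHS
      exact Merging.key_bound p p' hac (cylinder (seg ω n))
        (Merging.measurableSet_cylinder _) (hp _) (hp' _) (q : ℝ) A hA
  exact ⟨hac.ae_le main, main⟩
end

section
/- Let p and p' be open-minded Borel probability measures on the Cantor space ℕ → Bool such that p is NOT absolutely continuous with respect to p'. Then p assigns positive probability to the event that p and p' polarize, i.e., p({ω : sup over all Borel sets A of |p(A | Γ_{ω|n}) − p'(A | Γ_{ω|n})| tends to 1 as n → ∞}) > 0. -/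
open MeasureTheory ProbabilityTheory Filter

namespace Polarization

/-- Projection onto the first `n` coordinates. -/
def proj (n : ℕ) : (ℕ → Bool) → (Fin n → Bool) := fun ω i => ω i

lemma measurable_proj (n : ℕ) : Measurable (proj n) :=
  measurable_pi_iff.mpr fun _ => measurable_pi_apply _

/-- The cylinder determined by a finite vector. -/
def cyl (n : ℕ) (v : Fin n → Bool) : Set (ℕ → Bool) := proj n ⁻¹' {v}

lemma measurableSet_cyl (n : ℕ) (v : Fin n → Bool) : MeasurableSet (cyl n v) :=
  measurable_proj n (measurableSet_singleton v)

lemma cyl_eq (n : ℕ) (v : Fin n → Bool) : cylinder (List.ofFn v) = cyl n v := by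
  ext ω
  constructor
  · intro h
    have : proj n ω = v := by
      funext i
      have := h (Fin.cast (List.length_ofFn (f := v)).symm i)
      rw [List.get_ofFn] at this
      simpa [proj] using this
    simpa [cyl] using this
  · intro h i
    have h' : proj n ω = v := h
    rw [List.get_ofFn]
    exact congrFun h' (Fin.cast (List.length_ofFn (f := v)) i)

lemma cylinder_seg (ω : ℕ → Bool) (n : ℕ) : cylinder (seg ω n) = cyl n (proj n ω) :=
  cyl_eq n (proj n ω)

lemma measurableSet_cylinder_seg (ω : ℕ → Bool) (n : ℕ) :
    MeasurableSet (cylinder (seg ω n)) := by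
  rw [cylinder_seg]; exact measurableSet_cyl _ _

/-- The filtration generated by the first `n` coordinates. -/
def 𝓕 : Filtration ℕ (inferInstance : MeasurableSpace (ℕ → Bool)) where
  seq n := MeasurableSpace.comap (proj n) ⊤
  mono' := by
    intro m n hmn
    show MeasurableSpace.comap (proj m) ⊤ ≤ MeasurableSpace.comap (proj n) ⊤
    have h : proj m = (fun (v : Fin n → Bool) (i : Fin m) => v (Fin.castLE hmn i)) ∘ proj n := rfl
    rw [h, ← MeasurableSpace.comap_comp]
    exact MeasurableSpace.comap_mono le_top
  le' := by
    intro n s hs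
    obtain ⟨t, -, rfl⟩ := hs
    have h : proj n ⁻¹' t = ⋃ v ∈ t, cyl n v := by
      ext ω; simp [cyl]
    rw [h]
    exact .biUnion (Set.to_countable t) fun v _ => measurableSet_cyl n v

lemma measurable_proj_F (n : ℕ) : Measurable[𝓕 n] (proj n) := fun s _ => ⟨s, trivial, rfl⟩

lemma iSup_F : (⨆ n, (𝓕 n : MeasurableSpace (ℕ → Bool))) =
    (inferInstance : MeasurableSpace (ℕ → Bool)) := by
  refine le_antisymm (iSup_le fun n => 𝓕.le n) ?_
  show (⨆ i : ℕ, MeasurableSpace.comap (fun ω : ℕ → Bool => ω i) inferInstance) ≤ _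
  refine iSup_le fun i => ?_
  have heq : (fun ω : ℕ → Bool => ω i) =
      (fun v : Fin (i + 1) → Bool => v ⟨i, Nat.lt_succ_self i⟩) ∘ proj (i + 1) := rfl
  calc MeasurableSpace.comap (fun ω : ℕ → Bool => ω i) inferInstance
      = MeasurableSpace.comap (proj (i + 1))
        (MeasurableSpace.comap (fun v : Fin (i + 1) → Bool => v ⟨i, Nat.lt_succ_self i⟩)
          inferInstance) := by rw [heq, ← MeasurableSpace.comap_comp]
    _ ≤ MeasurableSpace.comap (proj (i + 1)) ⊤ := MeasurableSpace.comap_mono le_top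
    _ ≤ ⨆ n, (𝓕 n : MeasurableSpace (ℕ → Bool)) :=
        le_iSup (fun n => (𝓕 n : MeasurableSpace (ℕ → Bool))) (i + 1)

/-- The conditional probability of `N` given the cylinder of `v`. -/
noncomputable def G (p : Measure (ℕ → Bool)) (N : Set (ℕ → Bool)) (n : ℕ)
    (v : Fin n → Bool) : ℝ :=
  (p (N ∩ cyl n v)).toReal / (p (cyl n v)).toReal

lemma G_nonneg (p : Measure (ℕ → Bool)) (N : Set (ℕ → Bool)) (n : ℕ) (v : Fin n → Bool) :
    0 ≤ G p N n v :=
  div_nonneg ENNReal.toReal_nonneg ENNReal.toReal_nonneg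

lemma G_le_one (p : Measure (ℕ → Bool)) [IsFiniteMeasure p] (N : Set (ℕ → Bool)) (n : ℕ)
    (v : Fin n → Bool) : G p N n v ≤ 1 :=
  div_le_one_of_le₀
    (ENNReal.toReal_mono (measure_ne_top p _) (measure_mono Set.inter_subset_right))
    ENNReal.toReal_nonneg

lemma measurable_G_proj_F (p : Measure (ℕ → Bool)) (N : Set (ℕ → Bool)) (n : ℕ) :
    Measurable[𝓕 n] (fun ω => G p N n (proj n ω)) := fun u _ =>
  ⟨G p N n ⁻¹' u, trivial, rfl⟩

lemma measurable_G_proj (p : Measure (ℕ → Bool)) (N : Set (ℕ → Bool)) (n : ℕ) :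
    Measurable (fun ω => G p N n (proj n ω)) :=
  (measurable_G_proj_F p N n).mono (𝓕.le n) le_rfl

lemma integrable_G_proj (p : Measure (ℕ → Bool)) [IsProbabilityMeasure p]
    (N : Set (ℕ → Bool)) (n : ℕ) :
    Integrable (fun ω => G p N n (proj n ω)) p := by
  refine ⟨(measurable_G_proj p N n).aestronglyMeasurable,
    HasFiniteIntegral.of_bounded (C := 1) (ae_of_all _ fun ω => ?_)⟩
  rw [Real.norm_eq_abs, abs_of_nonneg (G_nonneg _ _ _ _)]
  exact G_le_one p N n _

lemma condexp_eq (p : Measure (ℕ → Bool)) [IsProbabilityMeasure p]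
    (hp : ∀ x : List Bool, 0 < p (cylinder x))
    {N : Set (ℕ → Bool)} (hN : MeasurableSet N) (n : ℕ) :
    (fun ω => G p N n (proj n ω)) =ᵐ[p] p[N.indicator (fun _ => (1 : ℝ)) | 𝓕 n] := by
  have hcyl_ne : ∀ (v : Fin n → Bool), p (cyl n v) ≠ 0 := fun v => by
    rw [← cyl_eq]; exact (hp (List.ofFn v)).ne'
  refine ae_eq_condExp_of_forall_setIntegral_eq (𝓕.le n)
    ((integrable_const 1).indicator hN)
    (fun s _ _ => (integrable_G_proj p N n).integrableOn) ?_
    (measurable_G_proj_F p N n).stronglyMeasurable.aestronglyMeasurable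
  intro s hs _
  obtain ⟨t, -, rfl⟩ := hs
  classical
  set T : Finset (Fin n → Bool) := (Set.toFinite t).toFinset with hT
  have hsplit : proj n ⁻¹' t = ⋃ v ∈ T, cyl n v := by
    ext ω
    simp only [Set.mem_preimage, Set.mem_iUnion, cyl, hT, Set.Finite.mem_toFinset,
      Set.mem_singleton_iff]
    exact ⟨fun h => ⟨proj n ω, h, rfl⟩, fun ⟨v, hv, hev⟩ => hev ▸ hv⟩
  have hdisj : (T : Set (Fin n → Bool)).PairwiseDisjoint (cyl n) := by
    intro v _ w _ hvw
    exact (Set.disjoint_singleton.mpr hvw).preimage _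
  have hdisj' : (T : Set (Fin n → Bool)).PairwiseDisjoint (fun v => cyl n v ∩ N) := by
    intro v hv w hw hvw
    exact ((hdisj hv hw hvw).mono Set.inter_subset_left Set.inter_subset_left)
  rw [hsplit, integral_biUnion_finset T (fun v _ => measurableSet_cyl n v) hdisj
      (fun v _ => (integrable_G_proj p N n).integrableOn),
    setIntegral_indicator hN, setIntegral_const, Set.iUnion₂_inter, measureReal_def,
    measure_biUnion_finset hdisj' (fun v _ => (measurableSet_cyl n v).inter hN),
    smul_eq_mul, mul_one, ENNReal.toReal_sum (fun v _ => measure_ne_top p _)]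
  refine Finset.sum_congr rfl fun v _ => ?_
  have hconst : ∀ x ∈ cyl n v, G p N n (proj n x) = G p N n v := fun x hx => by
    have : proj n x = v := hx
    rw [this]
  rw [setIntegral_congr_fun (measurableSet_cyl n v) hconst, setIntegral_const, smul_eq_mul, measureReal_def,
    G, mul_comm, div_mul_cancel₀, Set.inter_comm]
  exact ENNReal.toReal_ne_zero.mpr ⟨hcyl_ne v, measure_ne_top p _⟩

lemma tendsto_G (p : Measure (ℕ → Bool)) [IsProbabilityMeasure p]
    (hp : ∀ x : List Bool, 0 < p (cylinder x))
    {N : Set (ℕ → Bool)} (hN : MeasurableSet N) :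
    ∀ᵐ ω ∂p, Tendsto (fun n => G p N n (proj n ω)) atTop
      (nhds (N.indicator (fun _ => (1 : ℝ)) ω)) := by
  have hf : Integrable (N.indicator fun _ => (1 : ℝ)) p := (integrable_const 1).indicator hN
  have hmeas : StronglyMeasurable[⨆ n, (𝓕 n : MeasurableSpace (ℕ → Bool))]
      (N.indicator fun _ => (1 : ℝ)) := by
    rw [iSup_F]
    exact stronglyMeasurable_const.indicator hN
  filter_upwards [hf.tendsto_ae_condExp hmeas,
    ae_all_iff.mpr (fun n => condexp_eq p hp hN n)] with ω h1 h2
  have : (fun n => G p N n (proj n ω)) =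
      fun n => (p[N.indicator (fun _ => (1 : ℝ))|𝓕 n]) ω := funext fun n => h2 n
  rw [this]
  exact h1

end Polarization

open Polarization

/-- If `p` and `p'` are open-minded probability measures on Cantor space and `p` is NOT
absolutely continuous with respect to `p'`, then `p` assigns positive probability to the
event that `p` and `p'` polarize: the total variational distance between the conditional
measures given the first `n` bits tends to `1`. -/
theorem polarization_of_opinions (p p' : Measure (ℕ → Bool))
    [IsProbabilityMeasure p] [IsProbabilityMeasure p']
    (hp : ∀ x : List Bool, 0 < p (cylinder x))
    (hp' : ∀ x : List Bool, 0 < p' (cylinder x))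
    (hnac : ¬ p ≪ p') :
    0 < p {ω : ℕ → Bool | Tendsto
      (fun n : ℕ => ⨆ (A : Set (ℕ → Bool)) (_ : MeasurableSet A),
        |((p[|cylinder (seg ω n)]) A).toReal - ((p'[|cylinder (seg ω n)]) A).toReal|)
      atTop (nhds 1)} := by
  classical
  obtain ⟨s0, hs0', hs0⟩ : ∃ s : Set (ℕ → Bool), p' s = 0 ∧ p s ≠ 0 := by
    by_contra h
    push_neg at h
    exact hnac (Measure.AbsolutelyContinuous.mk fun s _ hs => h s hs)
  set N := toMeasurable p' s0 with hNdef
  have hN : MeasurableSet N := measurableSet_toMeasurable _ _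
  have hN0 : p' N = 0 := by rw [hNdef, measure_toMeasurable]; exact hs0'
  have hNpos : 0 < p N :=
    lt_of_lt_of_le (pos_iff_ne_zero.mpr hs0) (measure_mono (subset_toMeasurable p' s0))
  refine lt_of_lt_of_le hNpos (measure_mono_ae ?_)
  filter_upwards [tendsto_G p hp hN] with ω hω
  intro hmem
  rw [Set.indicator_of_mem hmem] at hω
  show Tendsto _ atTop (nhds 1)
  -- upper and lower bounds for the sup
  have habs : ∀ n (A : Set (ℕ → Bool)), MeasurableSet A →
      |((p[|cylinder (seg ω n)]) A).toReal - ((p'[|cylinder (seg ω n)]) A).toReal| ≤ 1 := by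
    intro n A _
    have hb : ∀ (q : Measure (ℕ → Bool)) (_ : IsProbabilityMeasure q)
        (hq : q (cylinder (seg ω n)) ≠ 0), ((q[|cylinder (seg ω n)]) A).toReal ≤ 1 := by
      intro q hq hq0
      haveI := cond_isProbabilityMeasure (μ := q) hq0
      simpa using ENNReal.toReal_mono ENNReal.one_ne_top (prob_le_one (μ := q[|cylinder (seg ω n)]) (s := A))
    have h1 := hb p inferInstance (hp (seg ω n)).ne'
    have h2 := hb p' inferInstance (hp' (seg ω n)).ne'
    have h3 : (0:ℝ) ≤ ((p[|cylinder (seg ω n)]) A).toReal := ENNReal.toReal_nonneg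
    have h4 : (0:ℝ) ≤ ((p'[|cylinder (seg ω n)]) A).toReal := ENNReal.toReal_nonneg
    rw [abs_sub_le_iff]
    constructor <;> linarith
  have hup : ∀ n, (⨆ (A : Set (ℕ → Bool)) (_ : MeasurableSet A),
      |((p[|cylinder (seg ω n)]) A).toReal - ((p'[|cylinder (seg ω n)]) A).toReal|) ≤ 1 :=
    fun n => Real.iSup_le
      (fun A => Real.iSup_le (fun hA => habs n A hA) zero_le_one) zero_le_one
  have hlow : ∀ n, G p N n (proj n ω) ≤ ⨆ (A : Set (ℕ → Bool)) (_ : MeasurableSet A),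
      |((p[|cylinder (seg ω n)]) A).toReal - ((p'[|cylinder (seg ω n)]) A).toReal| := by
    intro n
    have hbdd : BddAbove (Set.range fun A : Set (ℕ → Bool) =>
        ⨆ (_ : MeasurableSet A),
          |((p[|cylinder (seg ω n)]) A).toReal - ((p'[|cylinder (seg ω n)]) A).toReal|) := by
      refine ⟨1, ?_⟩
      rintro x ⟨A, rfl⟩
      exact Real.iSup_le (fun hA => habs n A hA) zero_le_one
    have hΓ : MeasurableSet (cylinder (seg ω n)) := measurableSet_cylinder_seg ω n
    have hterm : |((p[|cylinder (seg ω n)]) N).toReal - ((p'[|cylinder (seg ω n)]) N).toReal|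
        = G p N n (proj n ω) := by
      have hz : (p'[|cylinder (seg ω n)]) N = 0 := by
        rw [cond_apply hΓ, measure_mono_null Set.inter_subset_right hN0, mul_zero]
      have hv : ((p[|cylinder (seg ω n)]) N).toReal = G p N n (proj n ω) := by
        rw [cond_apply hΓ, ENNReal.toReal_mul, ENNReal.toReal_inv, G, ← cylinder_seg,
          Set.inter_comm, inv_mul_eq_div]
      rw [hz, hv]
      simp [abs_of_nonneg (G_nonneg p N n (proj n ω))]
    refine le_ciSup_of_le hbdd N ?_
    rw [ciSup_pos hN]
    exact le_of_eq hterm.symm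
  exact tendsto_of_tendsto_of_tendsto_of_le_of_le hω tendsto_const_nhds hlow hup
end
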